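/- If X is a binomial random variable with parameters n and p, and 0 < ε ≤ 3/2, then P(|X - E[X]| ≥ ε E[X]) ≤ 2 exp(-ε² E[X] / 3). -/

import Mathlib

open scoped Classical

/-- Weight of an outcome `ω` of `n` independent Bernoulli(p) trials. -/
noncomputable def binWeight (n : ℕ) (p : ℝ) (ω : Fin n → Bool) : ℝ :=
  ∏ i, if ω i then p else 1 - p

/-- Probability of an event in the binomial model `B(n,p)`. -/
noncomputable def binProb (n : ℕ) (p : ℝ) (E : (Fin n → Bool) → Prop) : ℝ :=
  ∑ ω : Fin n → Bool, if E ω then binWeight n p ω else 0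

/-- The number of successes in the outcome `ω`. -/
def binCount {n : ℕ} (ω : Fin n → Bool) : ℕ :=
  (Finset.univ.filter fun i => ω i = true).card

lemma binWeight_nonneg {n : ℕ} {p : ℝ} (hp0 : 0 ≤ p) (hp1 : p ≤ 1) (ω : Fin n → Bool) :
    0 ≤ binWeight n p ω := by
  apply Finset.prod_nonneg
  intro i _
  by_cases h : ω i <;> simp [h] <;> linarith

lemma bin_mgf {n : ℕ} {p : ℝ} (t : ℝ) :
    ∑ ω : Fin n → Bool, binWeight n p ω * Real.exp (t * (binCount ω : ℝ)) =
      (1 - p + p * Real.exp t) ^ n := by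
  have key : ∀ ω : Fin n → Bool, binWeight n p ω * Real.exp (t * (binCount ω : ℝ)) =
      ∏ i, (if ω i then p * Real.exp t else 1 - p) := by
    intro ω
    have h1 : Real.exp (t * (binCount ω : ℝ)) =
        ∏ i, (if ω i then Real.exp t else 1) := by
      rw [Finset.prod_ite, Finset.prod_const, Finset.prod_const_one, mul_one]
      rw [mul_comm, Real.exp_nat_mul]
      rfl
    rw [binWeight, h1, ← Finset.prod_mul_distrib]
    apply Finset.prod_congr rfl
    intro i _
    by_cases h : ω i <;> simp [h]
  calc ∑ ω : Fin n → Bool, binWeight n p ω * Real.exp (t * (binCount ω : ℝ))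
      = ∑ ω : Fin n → Bool, ∏ i, (if ω i then p * Real.exp t else 1 - p) := by
        exact Finset.sum_congr rfl fun ω _ => key ω
    _ = ∏ _i : Fin n, ∑ b : Bool, (if b then p * Real.exp t else 1 - p) := by
        rw [Finset.prod_univ_sum]
        rw [Fintype.piFinset_univ]
    _ = (1 - p + p * Real.exp t) ^ n := by
        simp [Finset.prod_const]
        ring_nf

lemma bin_tail_upper {n : ℕ} {p : ℝ} (hp0 : 0 ≤ p) (hp1 : p ≤ 1) (a t : ℝ) (ht : 0 ≤ t) :
    binProb n p (fun ω => (binCount ω : ℝ) ≥ a) ≤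
      Real.exp (-(t * a)) * (1 - p + p * Real.exp t) ^ n := by
  rw [← bin_mgf t, Finset.mul_sum, binProb]
  apply Finset.sum_le_sum
  intro ω _
  have hw := binWeight_nonneg hp0 hp1 ω
  by_cases h : (binCount ω : ℝ) ≥ a
  · simp only [h, if_pos]
    have h1 : (1:ℝ) ≤ Real.exp (t * ((binCount ω : ℝ) - a)) := by
      apply Real.one_le_exp
      exact mul_nonneg ht (by linarith)
    calc binWeight n p ω = binWeight n p ω * 1 := by ring
      _ ≤ binWeight n p ω * Real.exp (t * ((binCount ω : ℝ) - a)) := by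
          exact mul_le_mul_of_nonneg_left h1 hw
      _ = Real.exp (-(t * a)) * (binWeight n p ω * Real.exp (t * (binCount ω : ℝ))) := by
          rw [show t * ((binCount ω : ℝ) - a) = -(t * a) + t * (binCount ω : ℝ) by ring,
            Real.exp_add]; ring
  · simp only [h, if_neg]
    positivity

lemma bin_tail_lower {n : ℕ} {p : ℝ} (hp0 : 0 ≤ p) (hp1 : p ≤ 1) (a t : ℝ) (ht : t ≤ 0) :
    binProb n p (fun ω => (binCount ω : ℝ) ≤ a) ≤
      Real.exp (-(t * a)) * (1 - p + p * Real.exp t) ^ n := by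
  rw [← bin_mgf t, Finset.mul_sum, binProb]
  apply Finset.sum_le_sum
  intro ω _
  have hw := binWeight_nonneg hp0 hp1 ω
  by_cases h : (binCount ω : ℝ) ≤ a
  · simp only [h, if_pos]
    have h1 : (1:ℝ) ≤ Real.exp (t * ((binCount ω : ℝ) - a)) := by
      apply Real.one_le_exp
      nlinarith
    calc binWeight n p ω = binWeight n p ω * 1 := by ring
      _ ≤ binWeight n p ω * Real.exp (t * ((binCount ω : ℝ) - a)) := by
          exact mul_le_mul_of_nonneg_left h1 hw
      _ = Real.exp (-(t * a)) * (binWeight n p ω * Real.exp (t * (binCount ω : ℝ))) := by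
          rw [show t * ((binCount ω : ℝ) - a) = -(t * a) + t * (binCount ω : ℝ) by ring,
            Real.exp_add]; ring
  · simp only [h, if_neg]
    positivity

lemma bin_union {n : ℕ} {p : ℝ} (hp0 : 0 ≤ p) (hp1 : p ≤ 1)
    (E E1 E2 : (Fin n → Bool) → Prop) (h : ∀ ω, E ω → E1 ω ∨ E2 ω) :
    binProb n p E ≤ binProb n p E1 + binProb n p E2 := by
  rw [binProb, binProb, binProb, ← Finset.sum_add_distrib]
  apply Finset.sum_le_sum
  intro ω _
  have hw := binWeight_nonneg hp0 hp1 ω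
  by_cases hE : E ω
  · rcases h ω hE with h1 | h1 <;> by_cases h2 : E1 ω <;> by_cases h3 : E2 ω <;>
      simp_all <;> linarith
  · simp only [hE, if_neg]
    by_cases h2 : E1 ω <;> by_cases h3 : E2 ω <;> simp_all <;> linarith

lemma exp_cube_bound {x : ℝ} (h0 : 0 ≤ x) (h1 : x ≤ 1) :
    Real.exp x ≤ 1 + x + x ^ 2 / 2 + 2 / 9 * x ^ 3 := by
  have h := Real.exp_bound' h0 h1 (n := 3) (by norm_num)
  simp [Finset.sum_range_succ, Nat.factorial] at h
  nlinarith [h]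

lemma exp_cube_bound_neg {x : ℝ} (h0 : 0 ≤ x) (h1 : x ≤ 1) :
    Real.exp (-x) ≤ 1 - x + x ^ 2 / 2 + 2 / 9 * x ^ 3 := by
  have hx : |(-x)| ≤ 1 := by rw [abs_neg, abs_of_nonneg h0]; exact h1
  have h := Real.exp_bound hx (n := 3) (by norm_num)
  simp [Finset.sum_range_succ, Nat.factorial, abs_neg, abs_of_nonneg h0] at h
  have h2 := abs_sub_le_iff.1 h
  nlinarith [h2.1, h2.2]

lemma bin_base {n : ℕ} {p : ℝ} (hp0 : 0 ≤ p) (hp1 : p ≤ 1) (t : ℝ) :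
    (1 - p + p * Real.exp t) ^ n ≤ Real.exp ((n : ℝ) * (p * (Real.exp t - 1))) := by
  have he : 0 ≤ p * Real.exp t := mul_nonneg hp0 (Real.exp_pos t).le
  have hb0 : 0 ≤ 1 - p + p * Real.exp t := by linarith
  have h1 : 1 - p + p * Real.exp t ≤ Real.exp (p * (Real.exp t - 1)) := by
    nlinarith [Real.add_one_le_exp (p * (Real.exp t - 1))]
  calc (1 - p + p * Real.exp t) ^ n ≤ (Real.exp (p * (Real.exp t - 1))) ^ n :=
        pow_le_pow_left₀ hb0 h1 n
    _ = Real.exp ((n : ℝ) * (p * (Real.exp t - 1))) := (Real.exp_nat_mul _ n).symm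


/-- Multiplicative Chernoff bound: if `X ∈ B(n,p)` and `0 < ε ≤ 3/2`, then
`P(|X - E[X]| ≥ ε E[X]) ≤ 2 exp(-ε² E[X]/3)`, where `E[X] = np`. -/
theorem chernoff_multiplicative (n : ℕ) (p ε : ℝ) (hp0 : 0 < p) (hp1 : p ≤ 1)
    (hε0 : 0 < ε) (hε : ε ≤ 3 / 2) :
    binProb n p (fun ω => |(binCount ω : ℝ) - (n : ℝ) * p| ≥ ε * ((n : ℝ) * p)) ≤
      2 * Real.exp (-(ε ^ 2 * ((n : ℝ) * p) / 3)) := by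
  have hp0' : (0:ℝ) ≤ p := le_of_lt hp0
  set μ : ℝ := (n : ℝ) * p with hμ
  have hμ0 : 0 ≤ μ := by positivity
  set x : ℝ := 3 * ε / 5 with hx
  have hx0 : 0 ≤ x := by positivity
  have hx1 : x ≤ 1 := by rw [hx]; linarith
  -- key scalar inequality
  have hkey : x ^ 2 / 2 + 2 / 9 * x ^ 3 - x * ε + ε ^ 2 / 3 ≤ 0 := by
    rw [hx]
    nlinarith [mul_nonneg (mul_nonneg hε0.le hε0.le) (sub_nonneg.2 hε)]
  -- union bound
  have hunion := bin_union (n := n) hp0' hp1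
    (fun ω => |(binCount ω : ℝ) - μ| ≥ ε * μ)
    (fun ω => (binCount ω : ℝ) ≥ (1 + ε) * μ)
    (fun ω => (binCount ω : ℝ) ≤ (1 - ε) * μ)
    (by
      intro ω h
      rcases le_abs.1 h with h1 | h1
      · left; linarith
      · right; linarith)
  -- upper tail
  have hup : binProb n p (fun ω => (binCount ω : ℝ) ≥ (1 + ε) * μ) ≤
      Real.exp (-(ε ^ 2 * μ / 3)) := by
    calc binProb n p (fun ω => (binCount ω : ℝ) ≥ (1 + ε) * μ)
        ≤ Real.exp (-(x * ((1 + ε) * μ))) * (1 - p + p * Real.exp x) ^ n :=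
          bin_tail_upper hp0' hp1 _ x hx0
      _ ≤ Real.exp (-(x * ((1 + ε) * μ))) * Real.exp ((n : ℝ) * (p * (Real.exp x - 1))) :=
          mul_le_mul_of_nonneg_left (bin_base hp0' hp1 x) (Real.exp_pos _).le
      _ = Real.exp (-(x * ((1 + ε) * μ)) + μ * (Real.exp x - 1)) := by
          rw [← Real.exp_add, hμ]; ring_nf
      _ ≤ Real.exp (-(ε ^ 2 * μ / 3)) := by
          apply Real.exp_le_exp.2
          have hb := exp_cube_bound hx0 hx1
          have h2 : Real.exp x - 1 - x * (1 + ε) + ε ^ 2 / 3 ≤ 0 := by nlinarith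
          nlinarith [mul_nonneg hμ0 (neg_nonneg.2 h2)]
  -- lower tail
  have hlo : binProb n p (fun ω => (binCount ω : ℝ) ≤ (1 - ε) * μ) ≤
      Real.exp (-(ε ^ 2 * μ / 3)) := by
    calc binProb n p (fun ω => (binCount ω : ℝ) ≤ (1 - ε) * μ)
        ≤ Real.exp (-(-x * ((1 - ε) * μ))) * (1 - p + p * Real.exp (-x)) ^ n :=
          bin_tail_lower hp0' hp1 _ (-x) (by linarith)
      _ ≤ Real.exp (-(-x * ((1 - ε) * μ))) * Real.exp ((n : ℝ) * (p * (Real.exp (-x) - 1))) :=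
          mul_le_mul_of_nonneg_left (bin_base hp0' hp1 (-x)) (Real.exp_pos _).le
      _ = Real.exp (-(-x * ((1 - ε) * μ)) + μ * (Real.exp (-x) - 1)) := by
          rw [← Real.exp_add, hμ]; ring_nf
      _ ≤ Real.exp (-(ε ^ 2 * μ / 3)) := by
          apply Real.exp_le_exp.2
          have hb := exp_cube_bound_neg hx0 hx1
          have h2 : Real.exp (-x) - 1 + x * (1 - ε) + ε ^ 2 / 3 ≤ 0 := by nlinarith
          nlinarith [mul_nonneg hμ0 (neg_nonneg.2 h2)]
  calc binProb n p (fun ω => |(binCount ω : ℝ) - μ| ≥ ε * μ)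
      ≤ binProb n p (fun ω => (binCount ω : ℝ) ≥ (1 + ε) * μ) +
        binProb n p (fun ω => (binCount ω : ℝ) ≤ (1 - ε) * μ) := hunion
    _ ≤ Real.exp (-(ε ^ 2 * μ / 3)) + Real.exp (-(ε ^ 2 * μ / 3)) := add_le_add hup hlo
    _ = 2 * Real.exp (-(ε ^ 2 * μ / 3)) := by ring
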